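/- arXiv:math/0306063 — 2 statements merged into one kernel-verified Lean document; each statement's English description precedes it below -/
import Mathlib

section
/- Let A, F, B, G, H, K, C be matrices of sizes n×n, q×q, n×m, q×p, m×q, m×p, p×n respectively over ℂ, and let s ∈ ℂ be such that sIₙ - A and sI_q - F are invertible. Then det( s·diag(Iₙ, I_q) - [[A + BKC, BH],[GC, F]] ) = det(sIₙ - A)·det(sI_q - F)·det( [[I_p, C(sIₙ-A)⁻¹B],[H(sI_q-F)⁻¹G + K, I_m]] ). -/
open Matrix

/-- The closed-loop characteristic determinant identity:
`det(s·I_{n+q} - [[A + BKC, BH],[GC, F]]) =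
 det(sIₙ - A)·det(sI_q - F)·det([[I_p, C(sIₙ-A)⁻¹B],[H(sI_q-F)⁻¹G + K, I_m]])`,
for `s` such that `sIₙ - A` and `sI_q - F` are invertible. -/
theorem closed_loop_determinant_identity {n m p q : ℕ}
    (A : Matrix (Fin n) (Fin n) ℂ) (B : Matrix (Fin n) (Fin m) ℂ)
    (C : Matrix (Fin p) (Fin n) ℂ)
    (F : Matrix (Fin q) (Fin q) ℂ) (G : Matrix (Fin q) (Fin p) ℂ)
    (H : Matrix (Fin m) (Fin q) ℂ) (K : Matrix (Fin m) (Fin p) ℂ)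
    (s : ℂ)
    (hA : IsUnit (s • (1 : Matrix (Fin n) (Fin n) ℂ) - A))
    (hF : IsUnit (s • (1 : Matrix (Fin q) (Fin q) ℂ) - F)) :
    (Matrix.fromBlocks
        (s • (1 : Matrix (Fin n) (Fin n) ℂ) - (A + B * K * C)) (-(B * H))
        (-(G * C)) (s • (1 : Matrix (Fin q) (Fin q) ℂ) - F)).det =
    (s • (1 : Matrix (Fin n) (Fin n) ℂ) - A).det *
    (s • (1 : Matrix (Fin q) (Fin q) ℂ) - F).det *
    (Matrix.fromBlocks
        (1 : Matrix (Fin p) (Fin p) ℂ)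
        (C * (s • (1 : Matrix (Fin n) (Fin n) ℂ) - A)⁻¹ * B)
        (H * (s • (1 : Matrix (Fin q) (Fin q) ℂ) - F)⁻¹ * G + K)
        (1 : Matrix (Fin m) (Fin m) ℂ)).det := by
  set SA := s • (1 : Matrix (Fin n) (Fin n) ℂ) - A with hSA
  set SF := s • (1 : Matrix (Fin q) (Fin q) ℂ) - F with hSF
  have hAd : IsUnit SA.det := (Matrix.isUnit_iff_isUnit_det _).mp hA
  haveI := hF.invertible
  set L := H * SF⁻¹ * G + K with hL
  rw [det_fromBlocks₂₂, Matrix.invOf_eq_nonsing_inv, det_fromBlocks_one₁₁]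
  have e1 : s • (1 : Matrix (Fin n) (Fin n) ℂ) - (A + B * K * C)
      - -(B * H) * SF⁻¹ * -(G * C) = SA + B * (-(L * C)) := by
    simp only [hSA, hL, Matrix.add_mul, Matrix.mul_add, Matrix.mul_neg, Matrix.neg_mul,
      neg_neg, Matrix.mul_assoc, sub_add_eq_sub_sub, sub_neg_eq_add]
    abel
  have e2 : (1 : Matrix (Fin m) (Fin m) ℂ) + -(L * C) * SA⁻¹ * B
      = 1 - L * (C * SA⁻¹ * B) := by
    simp only [Matrix.neg_mul, Matrix.mul_assoc, ← sub_eq_add_neg]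
  rw [e1, Matrix.det_add_mul B _ hAd, e2]
  ring
end

section
/- With notation as in the closed-loop determinant identity, for s not an eigenvalue of A nor of F: det( sI_{n+q} - [[A + BKC, BH],[GC, F]] ) = 0 if and only if det( [[I_p, C(sIₙ-A)⁻¹B],[H(sI_q-F)⁻¹G + K, I_m]] ) = 0. -/
open Matrix

/-- For `s` not an eigenvalue of `A` nor of `F`, the closed-loop pole
condition `det(sI_{n+q} - [[A + BKC, BH],[GC, F]]) = 0` holds iff the geometric
condition `det([[I_p, C(sIₙ-A)⁻¹B],[H(sI_q-F)⁻¹G + K, I_m]]) = 0` holds. -/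
theorem closed_loop_pole_iff_geometric {n m p q : ℕ}
    (A : Matrix (Fin n) (Fin n) ℂ) (B : Matrix (Fin n) (Fin m) ℂ)
    (C : Matrix (Fin p) (Fin n) ℂ)
    (F : Matrix (Fin q) (Fin q) ℂ) (G : Matrix (Fin q) (Fin p) ℂ)
    (H : Matrix (Fin m) (Fin q) ℂ) (K : Matrix (Fin m) (Fin p) ℂ)
    (s : ℂ)
    (hA : IsUnit (s • (1 : Matrix (Fin n) (Fin n) ℂ) - A))
    (hF : IsUnit (s • (1 : Matrix (Fin q) (Fin q) ℂ) - F)) :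
    (Matrix.fromBlocks
        (s • (1 : Matrix (Fin n) (Fin n) ℂ) - (A + B * K * C)) (-(B * H))
        (-(G * C)) (s • (1 : Matrix (Fin q) (Fin q) ℂ) - F)).det = 0 ↔
    (Matrix.fromBlocks
        (1 : Matrix (Fin p) (Fin p) ℂ)
        (C * (s • (1 : Matrix (Fin n) (Fin n) ℂ) - A)⁻¹ * B)
        (H * (s • (1 : Matrix (Fin q) (Fin q) ℂ) - F)⁻¹ * G + K)
        (1 : Matrix (Fin m) (Fin m) ℂ)).det = 0 := by
  set SA := s • (1 : Matrix (Fin n) (Fin n) ℂ) - A with hSA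
  set SF := s • (1 : Matrix (Fin q) (Fin q) ℂ) - F with hSF
  haveI := hA.invertible
  haveI := hF.invertible
  set L := H * SF⁻¹ * G + K with hL
  have hdA : SA.det ≠ 0 := ((Matrix.isUnit_iff_isUnit_det SA).mp hA).ne_zero
  have hdF : SF.det ≠ 0 := ((Matrix.isUnit_iff_isUnit_det SF).mp hF).ne_zero
  rw [Matrix.det_fromBlocks₂₂, Matrix.det_fromBlocks_one₁₁]
  have key : s • (1 : Matrix (Fin n) (Fin n) ℂ) - (A + B * K * C)
      - -(B * H) * ⅟SF * -(G * C) = SA - B * L * C := by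
    rw [Matrix.invOf_eq_nonsing_inv, hL, hSA]
    simp only [Matrix.neg_mul, Matrix.mul_neg, neg_neg, Matrix.mul_add,
      Matrix.add_mul, Matrix.mul_assoc]
    abel
  rw [key]
  have factor : SA - B * L * C = SA * (1 - SA⁻¹ * (B * L * C)) := by
    rw [Matrix.mul_sub, Matrix.mul_one, ← Matrix.mul_assoc,
      Matrix.mul_nonsing_inv _ ((Matrix.isUnit_iff_isUnit_det SA).mp hA),
      Matrix.one_mul]
  have wa : (1 - SA⁻¹ * (B * L * C)).det
      = (1 - L * (C * SA⁻¹ * B)).det := by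
    have h1 : SA⁻¹ * (B * L * C) = (SA⁻¹ * B) * (L * C) := by
      simp only [Matrix.mul_assoc]
    have h2 : (L * C) * (SA⁻¹ * B) = L * (C * SA⁻¹ * B) := by
      simp only [Matrix.mul_assoc]
    rw [h1, Matrix.det_one_sub_mul_comm, h2]
  rw [factor, Matrix.det_mul, wa, mul_eq_zero, mul_eq_zero]
  simp [hdA, hdF, hL]
end
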